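/- Let f ∈ L¹(ℝ^n) and suppose there exist constants δ > 0, C₀ > 0 and α ∈ (0,1) such that ‖f(·−y) − f(·)‖_{L¹(ℝ^n)} ≤ C₀|y|^α for all |y| < δ. Then there exist constants C > 0 and ε₀ > 0 such that |𝓕(f)(ξ)| ≤ C(e^{−ε²|ξ|²/(4π)} + ε^α) for every ξ ∈ ℝ^n and every 0 < ε < ε₀. -/

import Mathlib

open MeasureTheory FourierTransform

open scoped RealInnerProductSpace Real in
/-- Key estimate: for `ξ ≠ 0` with `1/(2‖ξ‖) < δ`, the Fourier transform is bounded
by `C₀ * (1/(2‖ξ‖))^α`. -/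
theorem stmt_3_aux (n : ℕ) (f : EuclideanSpace ℝ (Fin n) → ℂ)
    (hf : Integrable f)
    (δ C₀ α : ℝ) (_hα : 0 < α) (hC₀ : 0 ≤ C₀)
    (htrans : ∀ y : EuclideanSpace ℝ (Fin n), ‖y‖ < δ →
      (∫ x, ‖f (x - y) - f x‖) ≤ C₀ * ‖y‖ ^ α)
    (ξ : EuclideanSpace ℝ (Fin n)) (hξ : ξ ≠ 0) (hδξ : 1 / (2 * ‖ξ‖) < δ) :
    ‖𝓕 f ξ‖ ≤ C₀ * (1 / (2 * ‖ξ‖)) ^ α := by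
  set y : EuclideanSpace ℝ (Fin n) := (1 / (2 * ‖ξ‖ ^ 2) : ℝ) • ξ with hy
  have hξ0 : (0:ℝ) < ‖ξ‖ := norm_pos_iff.mpr hξ
  have hny : ‖y‖ = 1 / (2 * ‖ξ‖) := by
    rw [hy, norm_smul, Real.norm_eq_abs, abs_of_pos (by positivity)]
    field_simp
  have h1 : 𝓕 f ξ = (1 / (2 : ℂ)) • ∫ v, (Real.fourierChar (-⟪v, ξ⟫) : Circle) • (f v - f (v + y)) := by
    rw [Real.fourier_eq]
    exact fourierIntegral_eq_half_sub_half_period_translate hξ hf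
  have h2 : ‖𝓕 f ξ‖ ≤ (1 / 2) * ∫ v, ‖f v - f (v + y)‖ := by
    rw [h1, norm_smul]
    have : ‖(1 / (2 : ℂ))‖ = 1 / 2 := by norm_num
    rw [this]
    gcongr
    calc ‖∫ v, (Real.fourierChar (-⟪v, ξ⟫) : Circle) • (f v - f (v + y))‖
        ≤ ∫ v, ‖(Real.fourierChar (-⟪v, ξ⟫) : Circle) • (f v - f (v + y))‖ :=
          norm_integral_le_integral_norm _
      _ = ∫ v, ‖f v - f (v + y)‖ := by simp [norm_smul]
  have h3 : (∫ v, ‖f v - f (v + y)‖) = ∫ x, ‖f (x - y) - f x‖ := by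
    have := integral_add_right_eq_self (μ := volume)
      (fun x : EuclideanSpace ℝ (Fin n) ↦ ‖f (x - y) - f x‖) y
    rw [← this]
    simp
  have h4 : (∫ x, ‖f (x - y) - f x‖) ≤ C₀ * ‖y‖ ^ α := htrans y (by rw [hny]; exact hδξ)
  calc ‖𝓕 f ξ‖ ≤ (1 / 2) * (C₀ * ‖y‖ ^ α) := h2.trans (by rw [h3]; gcongr)
    _ ≤ C₀ * (1 / (2 * ‖ξ‖)) ^ α := by
        rw [hny]
        have := mul_nonneg hC₀ (Real.rpow_nonneg (show (0:ℝ) ≤ 1 / (2 * ‖ξ‖) by positivity) α)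
        linarith

/-- quantitative Riemann–Lebesgue lemma. -/
theorem stmt_3 (n : ℕ) (hn : 3 ≤ n) (f : EuclideanSpace ℝ (Fin n) → ℂ)
    (hf : Integrable f)
    (δ C₀ α : ℝ) (hδ : 0 < δ) (hC₀ : 0 < C₀) (hα : α ∈ Set.Ioo (0 : ℝ) 1)
    (htrans : ∀ y : EuclideanSpace ℝ (Fin n), ‖y‖ < δ →
      (∫ x, ‖f (x - y) - f x‖) ≤ C₀ * ‖y‖ ^ α) :
    ∃ C > 0, ∃ ε₀ > 0, ∀ (ξ : EuclideanSpace ℝ (Fin n)) (ε : ℝ), 0 < ε → ε < ε₀ →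
      ‖𝓕 f ξ‖ ≤ C * (Real.exp (-(ε ^ 2 * ‖ξ‖ ^ 2) / (4 * Real.pi)) + ε ^ α) := by
  have hπ : 0 < Real.pi := Real.pi_pos
  have hI : 0 ≤ ∫ x, ‖f x‖ := integral_nonneg fun x => norm_nonneg _
  set I := ∫ x, ‖f x‖ with hIdef
  set C := (I + C₀ + 1) * Real.exp (1 / (4 * Real.pi)) with hC
  have hexp1 : (1:ℝ) ≤ Real.exp (1 / (4 * Real.pi)) := Real.one_le_exp (by positivity)
  have hCpos : 0 < C := by positivity
  refine ⟨C, hCpos, δ, hδ, ?_⟩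
  intro ξ ε hε hεδ
  have hεα : (0:ℝ) ≤ ε ^ α := Real.rpow_nonneg hε.le α
  by_cases hcase : ε * ‖ξ‖ ≤ 1
  · have hb : ‖𝓕 f ξ‖ ≤ I :=
      VectorFourier.norm_fourierIntegral_le_integral_norm _ _ _ _ _
    have ht : ε ^ 2 * ‖ξ‖ ^ 2 ≤ 1 := by
      have h2 : (ε * ‖ξ‖) ^ 2 ≤ 1 := by nlinarith [norm_nonneg ξ, mul_nonneg hε.le (norm_nonneg ξ)]
      nlinarith
    have hexp : Real.exp (-1 / (4 * Real.pi)) ≤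
        Real.exp (-(ε ^ 2 * ‖ξ‖ ^ 2) / (4 * Real.pi)) := by
      apply Real.exp_le_exp.mpr
      rw [neg_div, neg_div, neg_le_neg_iff]
      gcongr
    have key : Real.exp (1 / (4 * Real.pi)) * Real.exp (-1 / (4 * Real.pi)) = 1 := by
      rw [← Real.exp_add, show (1 / (4 * Real.pi) + -1 / (4 * Real.pi)) = 0 by ring,
        Real.exp_zero]
    have e1 : I + C₀ + 1 = C * Real.exp (-1 / (4 * Real.pi)) := by
      rw [hC, mul_assoc, key, mul_one]
    have e2 : C * Real.exp (-1 / (4 * Real.pi)) ≤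
        C * Real.exp (-(ε ^ 2 * ‖ξ‖ ^ 2) / (4 * Real.pi)) :=
      mul_le_mul_of_nonneg_left hexp hCpos.le
    have e3 : ‖𝓕 f ξ‖ ≤ C * Real.exp (-(ε ^ 2 * ‖ξ‖ ^ 2) / (4 * Real.pi)) := by
      linarith
    nlinarith [mul_nonneg hCpos.le hεα]
  · push_neg at hcase
    have hξ0 : (0:ℝ) < ‖ξ‖ := by nlinarith
    have hξ : ξ ≠ 0 := by
      intro h
      rw [h, norm_zero] at hξ0
      exact lt_irrefl _ hξ0
    have hle : 1 / (2 * ‖ξ‖) ≤ ε := by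
      rw [div_le_iff₀ (by positivity)]
      nlinarith
    have hδξ : 1 / (2 * ‖ξ‖) < δ := by
      rw [div_lt_iff₀ (by positivity)]
      nlinarith
    have hb : ‖𝓕 f ξ‖ ≤ C₀ * (1 / (2 * ‖ξ‖)) ^ α :=
      stmt_3_aux n f hf δ C₀ α hα.1 hC₀.le htrans ξ hξ hδξ
    have hr : (1 / (2 * ‖ξ‖)) ^ α ≤ ε ^ α :=
      Real.rpow_le_rpow (by positivity) hle hα.1.le
    have hCC : C₀ ≤ C := by nlinarith
    calc ‖𝓕 f ξ‖ ≤ C₀ * ε ^ α := hb.trans (by gcongr)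
      _ ≤ C * (Real.exp (-(ε ^ 2 * ‖ξ‖ ^ 2) / (4 * Real.pi)) + ε ^ α) := by
          nlinarith [mul_nonneg (sub_nonneg.mpr hCC) hεα,
            mul_pos hCpos (Real.exp_pos (-(ε ^ 2 * ‖ξ‖ ^ 2) / (4 * Real.pi)))]
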